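/- The function f(x) = ln((2-x)/x) + (2/(2+x))·((x/2)·ln(x/2) + 1 - x/2), defined for x in (0,2), is strictly decreasing on (0,2). -/

import Mathlib

noncomputable def f (x : ℝ) : ℝ :=
  Real.log ((2 - x) / x) + (2 / (2 + x)) * ((x / 2) * Real.log (x / 2) + 1 - x / 2)

noncomputable def g (x : ℝ) : ℝ :=
  Real.log (2 - x) - Real.log x + (2 / (2 + x)) * ((x / 2) * Real.log (x / 2) + 1 - x / 2)

lemma g_hasDerivAt (x : ℝ) (hx : x ∈ Set.Ioo (0 : ℝ) 2) :
    HasDerivAt g (-(1 / (2 - x)) - 1 / x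
      + (-(2 / (2 + x) ^ 2)) * ((x / 2) * Real.log (x / 2) + 1 - x / 2)
      + (2 / (2 + x)) * ((1 / 2) * Real.log (x / 2))) x := by
  obtain ⟨hx0, hx2⟩ := hx
  have h2x : (2 : ℝ) - x ≠ 0 := by linarith
  have hxne : x ≠ 0 := ne_of_gt hx0
  have h2px : (2 : ℝ) + x ≠ 0 := by linarith
  have hx2ne : x / 2 ≠ 0 := by positivity
  have h1 : HasDerivAt (fun x : ℝ => Real.log (2 - x)) ((0 - 1) / (2 - x)) x :=
    ((hasDerivAt_const x (2 : ℝ)).sub (hasDerivAt_id x)).log h2x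
  have h2 : HasDerivAt Real.log x⁻¹ x := Real.hasDerivAt_log hxne
  have h3 : HasDerivAt (fun x : ℝ => 2 / (2 + x))
      ((0 * (2 + x) - 2 * (0 + 1)) / (2 + x) ^ 2) x :=
    (hasDerivAt_const x (2 : ℝ)).div ((hasDerivAt_const x (2 : ℝ)).add (hasDerivAt_id x)) h2px
  have hhalf : HasDerivAt (fun x : ℝ => x / 2) (1 / 2) x := (hasDerivAt_id x).div_const 2
  have hlog : HasDerivAt (fun x : ℝ => Real.log (x / 2)) ((1 / 2) / (x / 2)) x :=
    hhalf.log hx2ne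
  have h4 : HasDerivAt (fun x : ℝ => (x / 2) * Real.log (x / 2) + 1 - x / 2)
      ((1 / 2) * Real.log (x / 2) + (x / 2) * ((1 / 2) / (x / 2)) + 0 - 1 / 2) x :=
    ((hhalf.mul hlog).add (hasDerivAt_const x 1)).sub hhalf
  have h := ((h1.sub h2).add (h3.mul h4))
  refine HasDerivAt.congr_deriv h ?_
  field_simp
  ring

lemma aux_nonneg (t : ℝ) (ht0 : 0 < t) (ht1 : t < 1) : 0 ≤ t * Real.log t + 1 - t := by
  have h := Real.log_le_sub_one_of_pos (show (0:ℝ) < 1 / t by positivity)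
  rw [one_div, Real.log_inv] at h
  have h1 : t * t⁻¹ = 1 := mul_inv_cancel₀ (ne_of_gt ht0)
  nlinarith [mul_le_mul_of_nonneg_left h ht0.le]

lemma g_strictAntiOn : StrictAntiOn g (Set.Ioo (0 : ℝ) 2) := by
  apply strictAntiOn_of_deriv_neg (convex_Ioo 0 2)
  · exact fun x hx => ((g_hasDerivAt x hx).continuousAt).continuousWithinAt
  · intro x hx
    rw [interior_Ioo] at hx
    rw [(g_hasDerivAt x hx).deriv]
    obtain ⟨hx0, hx2⟩ := hx
    have hG : 0 ≤ (x / 2) * Real.log (x / 2) + 1 - x / 2 :=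
      aux_nonneg (x / 2) (by linarith) (by linarith)
    have hL : Real.log (x / 2) < 0 := Real.log_neg (by linarith) (by linarith)
    have h1 : 0 < 1 / (2 - x) := one_div_pos.mpr (by linarith)
    have h2 : 0 < 1 / x := by positivity
    have h3 : (0:ℝ) < 2 / (2 + x) ^ 2 := by positivity
    have h4 : (0:ℝ) < 2 / (2 + x) := by positivity
    have t3 : (-(2 / (2 + x) ^ 2)) * ((x / 2) * Real.log (x / 2) + 1 - x / 2) ≤ 0 := by
      apply mul_nonpos_of_nonpos_of_nonneg (by linarith) hG
    have t4 : (2 / (2 + x)) * ((1 / 2) * Real.log (x / 2)) ≤ 0 := by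
      apply mul_nonpos_of_nonneg_of_nonpos h4.le (by linarith)
    linarith

theorem f_strictAntiOn : StrictAntiOn f (Set.Ioo (0 : ℝ) 2) := by
  have hfg : ∀ x ∈ Set.Ioo (0 : ℝ) 2, f x = g x := by
    intro x hx
    obtain ⟨hx0, hx2⟩ := hx
    unfold f g
    rw [Real.log_div (by linarith) (ne_of_gt hx0)]
  intro x hx y hy hxy
  rw [hfg x hx, hfg y hy]
  exact g_strictAntiOn hx hy hxy
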